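/- arXiv:2007.11241 — 3 statements merged into one kernel-verified Lean document; each statement's English description precedes it below -/
import Mathlib

section
/- For the parameterized de-mixing matrix W = [[β*, hᴴ], [g, −γ I_{d−1}]] with β*γ = 1 − hᴴg and γ ≠ 0, the squared modulus of the determinant satisfies |det W|² = |γ|^{2(d−2)}. -/
open Matrix

/-- For the parameterized de-mixing matrix `W = [[β*, hᴴ], [g, -γ I]]` with
`β* γ = 1 - hᴴ g` and `γ ≠ 0`, one has `|det W|² = |γ|^{2(d-2)}`, where `d = n+1`. -/
theorem abs_det_demixing (n : ℕ) (hn : 1 ≤ n) (γ β : ℂ) (hγ : γ ≠ 0)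
    (g h : Fin n → ℂ)
    (hβ : star β * γ = 1 - ∑ j, star (h j) * g j)
    (W : Matrix (Fin 1 ⊕ Fin n) (Fin 1 ⊕ Fin n) ℂ)
    (hW : W = Matrix.fromBlocks (Matrix.of fun _ _ => star β)
        (Matrix.of fun _ j => star (h j)) (Matrix.of fun i _ => g i)
        (-γ • (1 : Matrix (Fin n) (Fin n) ℂ))) :
    ‖W.det‖ ^ 2 = ‖γ‖ ^ (2 * (n - 1)) := by
  set D : Matrix (Fin n) (Fin n) ℂ := -γ • (1 : Matrix (Fin n) (Fin n) ℂ) with hD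
  haveI : Invertible D := ⟨(-γ)⁻¹ • (1 : Matrix (Fin n) (Fin n) ℂ),
    by rw [hD, smul_mul_smul_comm, one_mul, inv_mul_cancel₀ (neg_ne_zero.mpr hγ), one_smul],
    by rw [hD, smul_mul_smul_comm, one_mul, mul_inv_cancel₀ (neg_ne_zero.mpr hγ), one_smul]⟩
  have hinv : ⅟D = (-γ)⁻¹ • (1 : Matrix (Fin n) (Fin n) ℂ) := invOf_eq_right_inv
    (by rw [hD, smul_mul_smul_comm, one_mul, mul_inv_cancel₀ (neg_ne_zero.mpr hγ), one_smul])
  have hdet : W.det = (-γ) ^ n * γ⁻¹ := by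
    rw [hW, Matrix.det_fromBlocks₂₂]
    have h1 : D.det = (-γ) ^ n := by
      rw [hD, Matrix.det_smul, Matrix.det_one, mul_one, Fintype.card_fin]
    have h2 : (Matrix.of (fun (_ : Fin 1) (_ : Fin 1) => star β) -
        Matrix.of (fun (_ : Fin 1) j => star (h j)) * ⅟D *
        Matrix.of (fun i (_ : Fin 1) => g i)).det = γ⁻¹ := by
      rw [hinv, Matrix.mul_smul, Matrix.mul_one, Matrix.smul_mul, Matrix.det_fin_one]
      simp only [Matrix.sub_apply, Matrix.of_apply, Matrix.smul_apply, Matrix.mul_apply,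
        smul_eq_mul]
      have hc : γ * γ⁻¹ = 1 := mul_inv_cancel₀ hγ
      field_simp
      linear_combination hβ
    rw [h1, h2]
  rw [hdet]
  rw [norm_mul, norm_pow, norm_inv, norm_neg]
  have hγ' : ‖γ‖ ≠ 0 := by simpa using hγ
  rw [show 2 * (n - 1) = (n - 1) * 2 by ring, pow_mul]
  congr 1
  field_simp
  rw [← pow_succ']
  congr 1
  omega
end

section
/- Let C be a d×d Hermitian positive definite matrix, w ∈ ℂ^d with σ² = wᴴ C w > 0, a = C w/σ², and let f ∈ ℂ^d satisfy wᴴ f = 1. Set ∇ = a − f. Then for all λ ≠ 1, (C/σ² − λ a aᴴ)⁻¹ ∇ = σ² C⁻¹ ∇; in particular the limit as λ → 1 of (C/σ² − λ a aᴴ)⁻¹ ∇ equals σ² C⁻¹ ∇. -/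
open Matrix
open scoped ComplexOrder

lemma aux_mul_vecMulVec {d : ℕ} (A : Matrix (Fin d) (Fin d) ℂ) (u v : Fin d → ℂ) :
    A * vecMulVec u v = vecMulVec (A.mulVec u) v := by
  ext i j
  simp only [mul_apply, vecMulVec_apply, mulVec, dotProduct, Finset.sum_mul]
  exact Finset.sum_congr rfl fun k _ => by ring

lemma aux_vecMulVec_mul {d : ℕ} (u v : Fin d → ℂ) (A : Matrix (Fin d) (Fin d) ℂ) :
    vecMulVec u v * A = vecMulVec u (v ᵥ* A) := by
  ext i j
  simp only [mul_apply, vecMulVec_apply, vecMul, dotProduct, Finset.mul_sum]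
  exact Finset.sum_congr rfl fun k _ => by ring

lemma aux_vecMulVec_mulVec {d : ℕ} (u v x : Fin d → ℂ) :
    (vecMulVec u v).mulVec x = (v ⬝ᵥ x) • u := by
  ext i
  simp only [mulVec, dotProduct, vecMulVec_apply, Pi.smul_apply, smul_eq_mul,
    Finset.sum_mul]
  exact Finset.sum_congr rfl fun k _ => by ring

lemma aux_smul_vecMulVec {d : ℕ} (s : ℂ) (u v : Fin d → ℂ) :
    vecMulVec (s • u) v = s • vecMulVec u v := by
  ext i j; simp [vecMulVec_apply, mul_assoc]

lemma aux_vecMulVec_smul {d : ℕ} (s : ℂ) (u v : Fin d → ℂ) :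
    vecMulVec u (s • v) = s • vecMulVec u v := by
  ext i j; simp [vecMulVec_apply]; ring

lemma aux_vecMulVec_mul_vecMulVec {d : ℕ} (u v x y : Fin d → ℂ) :
    vecMulVec u v * vecMulVec x y = (v ⬝ᵥ x) • vecMulVec u y := by
  ext i j
  simp only [mul_apply, vecMulVec_apply, Matrix.smul_apply, dotProduct,
    smul_eq_mul, Finset.sum_mul]
  exact Finset.sum_congr rfl fun k _ => by ring

/-- Proposition 2 of the paper: with `∇ = a − f` where `wᴴ f = 1`,
for all `λ ≠ 1` we have `(C/σ² − λ a aᴴ)⁻¹ ∇ = σ² C⁻¹ ∇`; in particular the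
limit as `λ → 1` of `(C/σ² − λ a aᴴ)⁻¹ ∇` equals `σ² C⁻¹ ∇`. -/
theorem prop2_limit (d : ℕ) (C : Matrix (Fin d) (Fin d) ℂ)
    (hC : C.PosDef) (w : Fin d → ℂ) (hw : w ≠ 0)
    (σ2 : ℂ) (hσ : σ2 = star w ⬝ᵥ C.mulVec w)
    (a : Fin d → ℂ) (ha : a = σ2⁻¹ • C.mulVec w)
    (f : Fin d → ℂ) (hf : star w ⬝ᵥ f = 1)
    (grad : Fin d → ℂ) (hgrad : grad = a - f) :
    (∀ l : ℂ, l ≠ 1 →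
      (σ2⁻¹ • C - l • Matrix.vecMulVec a (star a))⁻¹.mulVec grad =
        σ2 • C⁻¹.mulVec grad) ∧
    Filter.Tendsto
      (fun l : ℂ => (σ2⁻¹ • C - l • Matrix.vecMulVec a (star a))⁻¹.mulVec grad)
      (nhdsWithin 1 {(1 : ℂ)}ᶜ)
      (nhds (σ2 • C⁻¹.mulVec grad)) := by
  -- basic facts about σ2
  have hσpos : 0 < σ2 := hσ ▸ hC.dotProduct_mulVec_pos hw
  have hσne : σ2 ≠ 0 := ne_of_gt hσpos
  have hσstar : star σ2 = σ2 := by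
    have him : σ2.im = 0 := by
      have := (Complex.lt_def.mp hσpos).2
      simpa using this.symm
    exact Complex.conj_eq_iff_im.mpr him
  have hCw : C.mulVec w = σ2 • a := by
    rw [ha, smul_smul, mul_inv_cancel₀ hσne, one_smul]
  -- star a
  have hstara : star a = σ2⁻¹ • (star w ᵥ* C) := by
    rw [ha, star_smul, star_mulVec, hC.1.eq]
    congr 1
    rw [star_inv₀, hσstar]
  -- wᴴ a = 1
  have hwa : star w ⬝ᵥ a = 1 := by
    rw [ha, dotProduct_smul, ← hσ, smul_eq_mul, inv_mul_cancel₀ hσne]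
  -- aᴴ w = 1
  have haw : star a ⬝ᵥ w = 1 := by
    rw [hstara, smul_dotProduct, ← dotProduct_mulVec, ← hσ, smul_eq_mul,
      inv_mul_cancel₀ hσne]
  -- wᴴ grad = 0
  have hwg : star w ⬝ᵥ grad = 0 := by
    rw [hgrad, dotProduct_sub, hwa, hf, sub_self]
  -- C is invertible
  have hdet : IsUnit C.det := isUnit_iff_ne_zero.mpr (ne_of_gt hC.det_pos)
  have hCinv : C * C⁻¹ = 1 := mul_nonsing_inv C hdet
  have main : ∀ l : ℂ, l ≠ 1 →
      (σ2⁻¹ • C - l • Matrix.vecMulVec a (star a))⁻¹.mulVec grad =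
        σ2 • C⁻¹.mulVec grad := by
    intro l hl
    have h1l : (1 : ℂ) - l ≠ 0 := sub_ne_zero.mpr (Ne.symm hl)
    set c : ℂ := l / (1 - l) with hc
    set B : Matrix (Fin d) (Fin d) ℂ := σ2 • C⁻¹ + c • vecMulVec w (star w) with hB
    -- the key identity: (σ2⁻¹ • C - l • a aᴴ) * B = 1
    have key : (σ2⁻¹ • C - l • vecMulVec a (star a)) * B = 1 := by
      have e1 : C * vecMulVec w (star w) = σ2 • vecMulVec a (star w) := by
        rw [aux_mul_vecMulVec, hCw, aux_smul_vecMulVec]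
      have e2 : vecMulVec a (star a) * C⁻¹ = σ2⁻¹ • vecMulVec a (star w) := by
        rw [aux_vecMulVec_mul, hstara, smul_vecMul, vecMul_vecMul, hCinv,
          vecMul_one, aux_vecMulVec_smul]
      have e3 : vecMulVec a (star a) * vecMulVec w (star w)
          = vecMulVec a (star w) := by
        rw [aux_vecMulVec_mul_vecMulVec, haw, one_smul]
      set K := vecMulVec a (star w) with hK
      rw [hB, mul_add, sub_mul, sub_mul, smul_mul_assoc, smul_mul_assoc,
        mul_smul_comm, mul_smul_comm, smul_mul_assoc, smul_mul_assoc,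
        mul_smul_comm, mul_smul_comm, hCinv, e1, e2, e3, smul_smul, smul_smul,
        smul_smul, smul_smul, smul_smul]
      rw [hc]
      match_scalars
      all_goals field_simp [hc]
      all_goals ring
    rw [inv_eq_right_inv key, hB, add_mulVec, smul_mulVec,
      smul_mulVec, aux_vecMulVec_mulVec, hwg]
    simp
  refine ⟨main, ?_⟩
  have heq : (fun l : ℂ =>
        (σ2⁻¹ • C - l • Matrix.vecMulVec a (star a))⁻¹.mulVec grad)
      =ᶠ[nhdsWithin 1 {(1 : ℂ)}ᶜ] fun _ => σ2 • C⁻¹.mulVec grad := by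
    filter_upwards [self_mem_nhdsWithin] with x hx
    exact main x hx
  exact Filter.Tendsto.congr' heq.symm tendsto_const_nhds
end

section
/- Let C be a d×d Hermitian positive definite matrix, w ∈ ℂ^d with σ² = wᴴ C w > 0, and a = C w/σ². Then the matrix C/σ² − a aᴴ is positive semidefinite with rank exactly d − 1, and its kernel is the span of a. -/
open Matrix
open scoped ComplexOrder

lemma vecMulVec_mulVec' {d : ℕ} (a b v : Fin d → ℂ) :
    (Matrix.vecMulVec a b).mulVec v = (b ⬝ᵥ v) • a := by
  ext i
  simp [Matrix.mulVec, Matrix.vecMulVec_apply, dotProduct, Finset.mul_sum, mul_assoc,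
    mul_comm, mul_left_comm]

/-- The Hessian-type matrix `C/σ² − a aᴴ` is positive semidefinite of rank
`d − 1`, and its kernel is the span of `w`. -/
theorem hessian_rank_deficiency (d : ℕ) (C : Matrix (Fin d) (Fin d) ℂ)
    (hC : C.PosDef) (w : Fin d → ℂ) (hw : w ≠ 0)
    (σ2 : ℂ) (hσ : σ2 = star w ⬝ᵥ C.mulVec w)
    (a : Fin d → ℂ) (ha : a = σ2⁻¹ • C.mulVec w) :
    (σ2⁻¹ • C - Matrix.vecMulVec a (star a)).PosSemidef ∧
    (σ2⁻¹ • C - Matrix.vecMulVec a (star a)).rank = d - 1 ∧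
    (∀ v : Fin d → ℂ,
      (σ2⁻¹ • C - Matrix.vecMulVec a (star a)).mulVec v = 0 ↔
        ∃ c : ℂ, v = c • w) := by
  set M := σ2⁻¹ • C - Matrix.vecMulVec a (star a) with hM
  have hσpos : 0 < σ2 := hσ ▸ hC.dotProduct_mulVec_pos hw
  have hσ0 : σ2 ≠ 0 := hσpos.ne'
  have hσconj : (starRingEnd ℂ) σ2 = σ2 := by
    rw [Complex.conj_eq_iff_im]
    have := (Complex.lt_def.mp hσpos).2
    simpa using this.symm
  -- star a ⬝ᵥ v = σ2⁻¹ * (star w ⬝ᵥ C *ᵥ v)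
  have hdot : ∀ v : Fin d → ℂ, star a ⬝ᵥ v = σ2⁻¹ * (star w ⬝ᵥ C.mulVec v) := by
    intro v
    rw [ha]
    have : star (σ2⁻¹ • C.mulVec w) = (starRingEnd ℂ) σ2⁻¹ • star (C.mulVec w) := by
      ext i; simp [mul_comm]
    rw [this, smul_dotProduct, map_inv₀, hσconj]
    congr 1
    rw [Matrix.star_mulVec, hC.1.eq, ← Matrix.dotProduct_mulVec]
  -- the key decomposition
  have hkey : ∀ v : Fin d → ℂ,
      M.mulVec v = σ2⁻¹ • C.mulVec (v - (σ2⁻¹ * (star w ⬝ᵥ C.mulVec v)) • w) := by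
    intro v
    rw [hM, Matrix.sub_mulVec, Matrix.smul_mulVec, vecMulVec_mulVec', hdot, ha,
      Matrix.mulVec_sub, Matrix.mulVec_smul, smul_sub]
    congr 1
    rw [smul_smul, smul_smul]
    ring_nf
  have hMw : M.mulVec w = 0 := by
    rw [hkey w, ← hσ, inv_mul_cancel₀ hσ0, one_smul, sub_self, Matrix.mulVec_zero, smul_zero]
  -- kernel
  have hker : ∀ v : Fin d → ℂ, M.mulVec v = 0 ↔ ∃ c : ℂ, v = c • w := by
    intro v
    constructor
    · intro h
      rw [hkey v] at h
      have h1 : C.mulVec (v - (σ2⁻¹ * (star w ⬝ᵥ C.mulVec v)) • w) = 0 := by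
        have := smul_eq_zero.mp h
        rcases this with h' | h'
        · exact absurd h' (inv_ne_zero hσ0)
        · exact h'
      have h2 : v - (σ2⁻¹ * (star w ⬝ᵥ C.mulVec v)) • w = 0 := by
        by_contra hne
        have := hC.dotProduct_mulVec_pos hne
        rw [h1] at this
        simp at this
      exact ⟨σ2⁻¹ * (star w ⬝ᵥ C.mulVec v), by rwa [sub_eq_zero] at h2⟩
    · rintro ⟨c, rfl⟩
      rw [Matrix.mulVec_smul, hMw, smul_zero]
  -- the quadratic form
  have hquad : ∀ v : Fin d → ℂ,
      star v ⬝ᵥ M.mulVec v =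
        σ2⁻¹ * (star (v - (σ2⁻¹ * (star w ⬝ᵥ C.mulVec v)) • w) ⬝ᵥ
          C.mulVec (v - (σ2⁻¹ * (star w ⬝ᵥ C.mulVec v)) • w)) := by
    intro v
    set c : ℂ := σ2⁻¹ * (star w ⬝ᵥ C.mulVec v) with hc
    set u : Fin d → ℂ := v - c • w with hu
    have hwu : star w ⬝ᵥ C.mulVec u = 0 := by
      rw [hu, Matrix.mulVec_sub, Matrix.mulVec_smul, dotProduct_sub,
        dotProduct_smul, ← hσ, hc, smul_eq_mul]
      field_simp
      ring
    have hv : star v = star u + (starRingEnd ℂ) c • star w := by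
      ext i; simp [hu, mul_comm]
    rw [hkey v, ← hc, ← hu, dotProduct_smul, hv, add_dotProduct,
      smul_dotProduct, hwu]
    simp
  -- positive semidefinite
  obtain ⟨r, hr⟩ : ∃ r : ℝ, σ2 = (r : ℂ) :=
    ⟨σ2.re, by simp [Complex.ext_iff, ← (Complex.lt_def.mp hσpos).2]⟩
  have hrpos : 0 < r := by
    rw [hr] at hσpos
    exact_mod_cast hσpos
  have hσinv_nonneg : 0 ≤ σ2⁻¹ := by
    rw [hr, ← Complex.ofReal_inv]
    exact_mod_cast (inv_pos.mpr hrpos).le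
  have hherm : M.IsHermitian := by
    rw [hM, Matrix.IsHermitian, Matrix.conjTranspose_sub, Matrix.conjTranspose_smul, hC.1.eq]
    congr 1
    · rw [star_inv₀, Complex.star_def, hσconj]
    · ext i j
      simp [Matrix.conjTranspose_apply, Matrix.vecMulVec_apply, mul_comm]
  have hpsd : M.PosSemidef := by
    refine .of_dotProduct_mulVec_nonneg hherm fun v => ?_
    rw [hquad v]
    exact mul_nonneg hσinv_nonneg (hC.posSemidef.dotProduct_mulVec_nonneg _)
  -- rank
  have hkerspan : LinearMap.ker M.mulVecLin = Submodule.span ℂ {w} := by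
    ext v
    rw [LinearMap.mem_ker, Matrix.mulVecLin_apply, Submodule.mem_span_singleton, hker v]
    simp [eq_comm]
  have hrank : M.rank = d - 1 := by
    have h1 := LinearMap.finrank_range_add_finrank_ker M.mulVecLin
    rw [hkerspan, finrank_span_singleton hw, Module.finrank_pi, Fintype.card_fin] at h1
    rw [Matrix.rank]
    omega
  exact ⟨hpsd, hrank, hker⟩
end
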